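/- For every word u on a well-ordered alphabet, the leading word (with respect to the graded lex order) of the standard bracketing [u] equals u, and the coefficient of u in [u] is 1. -/

import Mathlib

/-- The lexicographic order of the paper: `u <_lex v` iff `v` is a proper prefix of `u`,
or `u = r ++ x :: s`, `v = r ++ y :: t` with letters `x < y`. -/
def PLt {X : Type*} [LinearOrder X] (u v : List X) : Prop :=
  (v <+: u ∧ v ≠ u) ∨
    ∃ (r s t : List X) (x y : X), x < y ∧ u = r ++ x :: s ∧ v = r ++ y :: t

def PLe {X : Type*} [LinearOrder X] (u v : List X) : Prop := PLt u v ∨ u = v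

/-- A nonempty word is Lyndon iff `u >_lex w ++ v` for every factorization `u = v ++ w`
with `v, w` nonempty. -/
def IsLyndon {X : Type*} [LinearOrder X] (u : List X) : Prop :=
  u ≠ [] ∧ ∀ v w : List X, u = v ++ w → v ≠ [] → w ≠ [] → PLt (w ++ v) u

/-- The graded lex order: compare first by degree, then by `<_lex`. -/
def GLt {X : Type*} [LinearOrder X] (deg : X → ℕ) (u v : List X) : Prop :=
  (u.map deg).sum < (v.map deg).sum ∨ ((u.map deg).sum = (v.map deg).sum ∧ PLt u v)

/-- The free algebra `k⟨X⟩`, with the words on `X` as a basis. -/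
abbrev FreeAlg (k X : Type*) [Field k] := MonoidAlgebra k (FreeMonoid X)

/-- `w` is the leading word of `f` with respect to the order `lt` on words. -/
def IsLeadingWord {k X : Type*} [Field k] (lt : FreeMonoid X → FreeMonoid X → Prop)
    (f : FreeAlg k X) (w : FreeMonoid X) : Prop :=
  w ∈ f.coeff.support ∧ ∀ u ∈ f.coeff.support, u ≠ w → lt u w

/-- A word is reducible with respect to a set `S ⊆ k⟨X⟩` if it is the leading word of a
nonzero element of `S`. -/
def Reducible {k X : Type*} [Field k] (lt : FreeMonoid X → FreeMonoid X → Prop)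
    (S : Set (FreeAlg k X)) (w : FreeMonoid X) : Prop :=
  ∃ f ∈ S, f ≠ 0 ∧ IsLeadingWord lt f w

/-- `v` is a factor of `u`. -/
def IsFactor {X : Type*} (v u : FreeMonoid X) : Prop := ∃ a b : FreeMonoid X, u = a * v * b

section Aux
variable {X : Type*} [LinearOrder X] {deg : X → ℕ}


lemma plt_irrefl (u : List X) : ¬ PLt u u := by
  rintro (⟨-, h⟩ | ⟨r, s, t, x, y, hxy, h1, h2⟩)
  · exact h rfl
  · rw [h1] at h2
    have h3 := List.append_cancel_left h2
    simp only [List.cons.injEq] at h3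
    exact absurd h3.1 hxy.ne

lemma glt_irrefl (u : List X) : ¬ GLt deg u u := by
  rintro (h | ⟨-, h⟩)
  · exact lt_irrefl _ h
  · exact plt_irrefl u h

lemma map_sum_nil (hdeg : ∀ x, 0 < deg x) {t : List X} (h : (t.map deg).sum = 0) : t = [] := by
  cases t with
  | nil => rfl
  | cons x s => simp only [List.map_cons, List.sum_cons] at h; exact absurd h (by have := hdeg x; omega)

lemma prefix_eq (hdeg : ∀ x, 0 < deg x) {u v : List X} (h : v <+: u)
    (hD : (u.map deg).sum = (v.map deg).sum) : u = v := by
  obtain ⟨t, rfl⟩ := h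
  have ht : (t.map deg).sum = 0 := by
    simp only [List.map_append, List.sum_append] at hD; omega
  rw [map_sum_nil hdeg ht, List.append_nil]

lemma plt_eqdeg (hdeg : ∀ x, 0 < deg x) {u v : List X}
    (hD : (u.map deg).sum = (v.map deg).sum) (h : PLt u v) :
    ∃ (r s t : List X) (x y : X), x < y ∧ u = r ++ x :: s ∧ v = r ++ y :: t := by
  rcases h with ⟨hpre, hne⟩ | h
  · exact absurd (prefix_eq hdeg hpre hD).symm hne
  · exact h

lemma lex_of_letter {r s t : List X} {x y : X} (hxy : x < y) :
    List.Lex (· < ·) (r ++ x :: s) (r ++ y :: t) := by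
  induction r with
  | nil => exact List.Lex.rel hxy
  | cons a r ih => exact List.Lex.cons ih

lemma letter_of_lex {u v : List X} (h : List.Lex (· < ·) u v) :
    (u <+: v ∧ u ≠ v) ∨
      ∃ (r s t : List X) (x y : X), x < y ∧ u = r ++ x :: s ∧ v = r ++ y :: t := by
  induction h with
  | nil => exact Or.inl ⟨List.nil_prefix, (List.cons_ne_nil _ _).symm⟩
  | @cons a l₁ l₂ h ih =>
    rcases ih with ⟨hp, hne⟩ | ⟨r, s, t, x, y, hxy, h1, h2⟩
    · exact Or.inl ⟨List.cons_prefix_cons.mpr ⟨rfl, hp⟩, by simpa using hne⟩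
    · exact Or.inr ⟨a :: r, s, t, x, y, hxy, by simp [h1], by simp [h2]⟩
  | @rel a l₁ b l₂ h => exact Or.inr ⟨[], l₁, l₂, a, b, h, rfl, rfl⟩

lemma glt_trans (hdeg : ∀ x, 0 < deg x) {u v w : List X}
    (h1 : GLt deg u v) (h2 : GLt deg v w) : GLt deg u w := by
  rcases h1 with h1 | ⟨e1, p1⟩ <;> rcases h2 with h2 | ⟨e2, p2⟩
  · exact Or.inl (h1.trans h2)
  · exact Or.inl (e2 ▸ h1)
  · exact Or.inl (e1 ▸ h2)
  · refine Or.inr ⟨e1.trans e2, ?_⟩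
    obtain ⟨r, s, t, x, y, hxy, hu, hv⟩ := plt_eqdeg hdeg e1 p1
    obtain ⟨r', s', t', x', y', hxy', hv', hw⟩ := plt_eqdeg hdeg e2 p2
    have l1 : List.Lex (· < ·) u v := hu ▸ hv ▸ lex_of_letter hxy
    have l2 : List.Lex (· < ·) v w := hv' ▸ hw ▸ lex_of_letter hxy'
    have l3 : List.Lex (· < ·) u w := List.lex_trans (fun h₁ h₂ => lt_trans h₁ h₂) l1 l2
    rcases letter_of_lex l3 with ⟨hp, hne⟩ | hlet
    · exact absurd (prefix_eq hdeg hp (e1.trans e2).symm) (Ne.symm hne)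
    · exact Or.inr hlet

lemma glt_append (hdeg : ∀ x, 0 < deg x) {w a w' b : List X} (h : GLt deg w a)
    (h' : (w'.map deg).sum ≤ (b.map deg).sum) : GLt deg (w ++ w') (a ++ b) := by
  rcases h with h | ⟨e, p⟩
  · left; simp only [List.map_append, List.sum_append]; omega
  · obtain ⟨r, s, t, x, y, hxy, rfl, rfl⟩ := plt_eqdeg hdeg e p
    simp only [List.map_append, List.sum_append, List.map_cons, List.sum_cons] at e
    rcases lt_or_eq_of_le h' with h' | h'
    · left; simp only [List.map_append, List.sum_append, List.map_cons, List.sum_cons]; omega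
    · refine Or.inr ⟨by simp only [List.map_append, List.sum_append, List.map_cons, List.sum_cons]; omega, ?_⟩
      exact Or.inr ⟨r, s ++ w', t ++ b, x, y, hxy, by simp, by simp⟩

lemma glt_append_left (hdeg : ∀ x, 0 < deg x) {a w' b : List X} (h : GLt deg w' b) :
    GLt deg (a ++ w') (a ++ b) := by
  rcases h with h | ⟨e, p⟩
  · left; simp only [List.map_append, List.sum_append]; omega
  · refine Or.inr ⟨by simp only [List.map_append, List.sum_append]; omega, ?_⟩
    obtain ⟨r, s, t, x, y, hxy, rfl, rfl⟩ := plt_eqdeg hdeg e p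
    exact Or.inr ⟨a ++ r, s, t, x, y, hxy, by simp, by simp⟩

end Aux

section MulLead
variable {k X : Type*} [Field k] [LinearOrder X]

lemma single_lead (deg : X → ℕ) (w : FreeMonoid X) :
    IsLeadingWord (fun a b => GLt deg (FreeMonoid.toList a) (FreeMonoid.toList b))
      (MonoidAlgebra.single w (1 : k)) w ∧
      (MonoidAlgebra.single w (1 : k)).coeff w = 1 := by
  classical
  refine ⟨⟨?_, ?_⟩, ?_⟩
  · rw [MonoidAlgebra.coeff_single, Finsupp.mem_support_iff, Finsupp.single_eq_same]; exact one_ne_zero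
  · intro v hv hne
    rw [MonoidAlgebra.coeff_single, Finsupp.support_single_ne_zero _ one_ne_zero, Finset.mem_singleton] at hv
    exact absurd hv hne
  · exact Finsupp.single_eq_same

lemma mul_lead (deg : X → ℕ) (hdeg : ∀ x, 0 < deg x) {f g : FreeAlg k X} {a b : List X}
    (hfa : IsLeadingWord (fun p q => GLt deg (FreeMonoid.toList p) (FreeMonoid.toList q))
      f (FreeMonoid.ofList a))
    (hf1 : f.coeff (FreeMonoid.ofList a) = 1)
    (hgb : IsLeadingWord (fun p q => GLt deg (FreeMonoid.toList p) (FreeMonoid.toList q))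
      g (FreeMonoid.ofList b))
    (hg1 : g.coeff (FreeMonoid.ofList b) = 1) :
    IsLeadingWord (fun p q => GLt deg (FreeMonoid.toList p) (FreeMonoid.toList q))
      (f * g) (FreeMonoid.ofList (a ++ b)) ∧
      (f * g).coeff (FreeMonoid.ofList (a ++ b)) = 1 := by
  classical
  have step : ∀ w1 ∈ f.coeff.support, ∀ w2 ∈ g.coeff.support,
      (w1 ≠ FreeMonoid.ofList a ∨ w2 ≠ FreeMonoid.ofList b) →
      GLt deg (FreeMonoid.toList w1 ++ FreeMonoid.toList w2) (a ++ b) := by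
    intro w1 h1 w2 h2 hne
    rcases eq_or_ne w1 (FreeMonoid.ofList a) with rfl | hna
    · have hnb : w2 ≠ FreeMonoid.ofList b := by
        rcases hne with h | h
        · exact absurd rfl h
        · exact h
      have h3 : GLt deg (FreeMonoid.toList w2) b := hgb.2 w2 h2 hnb
      exact glt_append_left hdeg h3
    · have h3 : GLt deg (FreeMonoid.toList w1) a := hfa.2 w1 h1 hna
      have hD : ((FreeMonoid.toList w2).map deg).sum ≤ (b.map deg).sum := by
        rcases eq_or_ne w2 (FreeMonoid.ofList b) with rfl | hnb
        · exact le_rfl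
        · have h4 : GLt deg (FreeMonoid.toList w2) b := hgb.2 w2 h2 hnb
          rcases h4 with h4 | ⟨e, -⟩
          · exact le_of_lt h4
          · exact le_of_eq e
      exact glt_append hdeg h3 hD
  have uniq : ∀ w1 ∈ f.coeff.support, ∀ w2 ∈ g.coeff.support,
      w1 * w2 = FreeMonoid.ofList (a ++ b) →
      w1 = FreeMonoid.ofList a ∧ w2 = FreeMonoid.ofList b := by
    intro w1 h1 w2 h2 hc
    by_contra hne
    rw [not_and_or] at hne
    have hlt := step w1 h1 w2 h2 hne
    have hceq : FreeMonoid.toList w1 ++ FreeMonoid.toList w2 = a ++ b := by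
      have := congrArg FreeMonoid.toList hc
      exact this
    rw [hceq] at hlt
    exact glt_irrefl _ hlt
  have coeff : (f * g).coeff (FreeMonoid.ofList (a ++ b)) = 1 := by
    rw [MonoidAlgebra.coeff_mul, Finsupp.sum]
    rw [Finset.sum_eq_single (FreeMonoid.ofList a)]
    · rw [Finsupp.sum, Finset.sum_eq_single (FreeMonoid.ofList b)]
      · rw [if_pos (FreeMonoid.ofList_append a b).symm, hf1, hg1, one_mul]
      · intro w2 hw2 hne2
        rw [if_neg]
        intro hcond
        exact hne2 (uniq _ hfa.1 _ hw2 hcond).2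
      · intro h
        rw [Finsupp.notMem_support_iff.mp h, mul_zero, if_pos (FreeMonoid.ofList_append a b).symm]
    · intro w1 hw1 hne1
      rw [Finsupp.sum]
      apply Finset.sum_eq_zero
      intro w2 hw2
      rw [if_neg]
      intro hcond
      exact hne1 (uniq _ hw1 _ hw2 hcond).1
    · intro h
      exact absurd hfa.1 h
  refine ⟨⟨Finsupp.mem_support_iff.mpr (by rw [coeff]; exact one_ne_zero), ?_⟩, coeff⟩
  intro w hw hne
  have hw' := MonoidAlgebra.support_coeff_mul_subset f g hw
  rw [Finset.mem_mul] at hw'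
  obtain ⟨w1, h1, w2, h2, rfl⟩ := hw'
  have hne' : w1 ≠ FreeMonoid.ofList a ∨ w2 ≠ FreeMonoid.ofList b := by
    by_contra hc
    rw [not_or, not_not, not_not] at hc
    exact hne (by rw [hc.1, hc.2, ← FreeMonoid.ofList_append])
  exact step w1 h1 w2 h2 hne'

end MulLead


/-- For every word `u`, the leading word (with respect to the graded lex order) of the
standard bracketing `[u]` is `u`, with coefficient `1`. The standard bracketing is
characterized by: `[1] = 1`, `[x] = x`, and for `u` of length `≥ 2` with Shirshov
factorization `u = u_L u_R`: `[u] = [[u_L],[u_R]]` if `u` is Lyndon and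
`[u] = [u_L][u_R]` otherwise. -/
theorem leadingWord_standardBracketing {k X : Type*} [Field k] [CharZero k] [LinearOrder X]
    (deg : X → ℕ) (hdeg : ∀ x, 0 < deg x)
    (br : List X → FreeAlg k X) (Sh : List X → List X × List X)
    (hSh : ∀ u : List X, 2 ≤ u.length →
      (Sh u).1 ++ (Sh u).2 = u ∧ (Sh u).1 ≠ [] ∧ (Sh u).2 ≠ [] ∧
        ∀ a b : List X, u = a ++ b → a ≠ [] → b ≠ [] → PLe b (Sh u).2)
    (hbr_nil : br [] = 1)
    (hbr_letter : ∀ x : X, br [x] = MonoidAlgebra.single (FreeMonoid.ofList [x]) 1)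
    (hbr_lyndon : ∀ u : List X, 2 ≤ u.length → IsLyndon u →
      br u = br (Sh u).1 * br (Sh u).2 - br (Sh u).2 * br (Sh u).1)
    (hbr_not : ∀ u : List X, 2 ≤ u.length → ¬ IsLyndon u →
      br u = br (Sh u).1 * br (Sh u).2) :
    ∀ u : List X,
      IsLeadingWord (fun a b => GLt deg (FreeMonoid.toList a) (FreeMonoid.toList b))
        (br u) (FreeMonoid.ofList u) ∧
      (br u).coeff (FreeMonoid.ofList u) = 1 := by
  classical
  have main : ∀ n : ℕ, ∀ u : List X, u.length = n →
      IsLeadingWord (fun a b => GLt deg (FreeMonoid.toList a) (FreeMonoid.toList b))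
        (br u) (FreeMonoid.ofList u) ∧
      (br u).coeff (FreeMonoid.ofList u) = 1 := by
    intro n
    induction n using Nat.strong_induction_on with
    | _ n ih =>
      intro u hu
      subst hu
      match u with
      | [] =>
        rw [hbr_nil, MonoidAlgebra.one_def]
        exact single_lead deg (1 : FreeMonoid X)
      | [x] =>
        rw [hbr_letter]
        exact single_lead deg _
      | (x :: y :: t) =>
        set u := x :: y :: t with hU
        have hlen : 2 ≤ u.length := by rw [hU]; simp
        obtain ⟨heq, hA, hB, -⟩ := hSh u hlen
        set a := (Sh u).1 with ha
        set b := (Sh u).2 with hb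
        have hlab : a.length + b.length = u.length := by rw [← heq]; simp
        have hA1 : 1 ≤ a.length := List.length_pos_iff.mpr hA
        have hB1 : 1 ≤ b.length := List.length_pos_iff.mpr hB
        obtain ⟨hfa, hf1⟩ := ih a.length (by omega) a rfl
        obtain ⟨hgb, hg1⟩ := ih b.length (by omega) b rfl
        have P := mul_lead deg hdeg hfa hf1 hgb hg1
        by_cases hLy : IsLyndon u
        · have hbrU : br u = br a * br b - br b * br a := hbr_lyndon u hlen hLy
          rw [hbrU, ← heq]
          have Q := mul_lead deg hdeg hgb hg1 hfa hf1
          have hba : GLt deg (b ++ a) (a ++ b) := by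
            have hp : PLt (b ++ a) u := hLy.2 a b heq.symm hA hB
            rw [← heq] at hp
            exact Or.inr ⟨by simp only [List.map_append, List.sum_append]; omega, hp⟩
          have hQ : ∀ w ∈ (br b * br a).coeff.support, GLt deg (FreeMonoid.toList w) (a ++ b) := by
            intro w hw
            rcases eq_or_ne w (FreeMonoid.ofList (b ++ a)) with rfl | hne
            · exact hba
            · exact glt_trans hdeg (Q.1.2 w hw hne) hba
          have hQu : (br b * br a).coeff (FreeMonoid.ofList (a ++ b)) = 0 := by
            by_contra h
            exact glt_irrefl _ (hQ _ (Finsupp.mem_support_iff.mpr h))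
          have hco : (br a * br b - br b * br a).coeff (FreeMonoid.ofList (a ++ b)) = 1 := by
            rw [MonoidAlgebra.coeff_sub, Finsupp.sub_apply, P.2, hQu, sub_zero]
          refine ⟨⟨Finsupp.mem_support_iff.mpr (by rw [hco]; exact one_ne_zero), ?_⟩, hco⟩
          intro w hw hne
          have hw' := Finsupp.support_sub hw
          rw [Finset.mem_union] at hw'
          rcases hw' with hw' | hw'
          · exact P.1.2 w hw' hne
          · exact hQ w hw'
        · have hbrU : br u = br a * br b := hbr_not u hlen hLy
          rw [hbrU, ← heq]
          exact P
  exact fun u => main u.length u rfl
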